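/- Suppose (x*, τ*, r*) with x* > 0, τ* the Gibbs distribution τ_i(r*) = exp(β Σ_{l∈i} r*_l)/Σ_{i'} exp(β Σ_{l∈i'} r*_l), and r* ≥ 0 satisfies: (a) 1/(x*_s)² = Σ_{l∈s} r*_l for all s; (b) for all l, Σ_{s: l∈s} x*_s ≤ Σ_{i: l∈i} τ*_i, with equality whenever r*_l > 0. Then (x*, τ*) is an optimal solution of problem MP (maximize Σ_s −1/x_s − (1/β) Σ_i τ_i log τ_i subject to Σ_{s:l∈s} x_s ≤ Σ_{i:l∈i} τ_i, Σ_i τ_i = 1, x,τ ≥ 0). -/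

import Mathlib

open Finset Real

private lemma lemA (x y : ℝ) (hx : 0 < x) (hy : 0 < y) :
    -1/x - (1/y^2)*x ≤ -1/y - (1/y^2)*y := by
  have h1 : (x - y)^2 ≥ 0 := by positivity
  have h2 : -1/x - (1/y^2)*x - (-1/y - (1/y^2)*y) = -((x-y)^2) / (x * y^2) := by
    field_simp; ring
  have h3 : -((x-y)^2) / (x * y^2) ≤ 0 := by
    apply div_nonpos_of_nonpos_of_nonneg <;> [linarith; positivity]
  linarith

private lemma lemB {ι : Type*} (I : Finset ι) (a τ : ι → ℝ)
    (ha : ∀ i ∈ I, 0 < a i) (hτ : ∀ i ∈ I, 0 ≤ τ i) (hsum : ∑ i ∈ I, τ i = 1) :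
    ∑ i ∈ I, τ i * Real.log (a i) - ∑ i ∈ I, τ i * Real.log (τ i)
      ≤ Real.log (∑ i ∈ I, a i) := by
  have hne : I.Nonempty := by
    by_contra h
    rw [Finset.not_nonempty_iff_eq_empty] at h
    simp [h] at hsum
  have hZ : 0 < ∑ i ∈ I, a i := Finset.sum_pos ha hne
  set Z := ∑ i ∈ I, a i with hZdef
  have key : ∀ i ∈ I, τ i * Real.log (a i) - τ i * Real.log (τ i) - τ i * Real.log Z
      ≤ a i / Z - τ i := by
    intro i hi
    rcases eq_or_lt_of_le (hτ i hi) with h0 | h0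
    · rw [← h0]; simp
      exact div_nonneg (ha i hi).le hZ.le
    · have hlog : Real.log (a i / (τ i * Z)) ≤ a i / (τ i * Z) - 1 :=
        Real.log_le_sub_one_of_pos (div_pos (ha i hi) (mul_pos h0 hZ))
      have heq : Real.log (a i / (τ i * Z)) = Real.log (a i) - Real.log (τ i) - Real.log Z := by
        rw [Real.log_div (ne_of_gt (ha i hi)) (ne_of_gt (mul_pos h0 hZ)),
          Real.log_mul (ne_of_gt h0) (ne_of_gt hZ)]
        ring
      have h2 := mul_le_mul_of_nonneg_left hlog (le_of_lt h0)
      rw [heq] at h2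
      have h3 : τ i * (a i / (τ i * Z) - 1) = a i / Z - τ i := by
        field_simp
      nlinarith [h2, h3]
  have hsum2 := Finset.sum_le_sum key
  rw [Finset.sum_sub_distrib, Finset.sum_sub_distrib, Finset.sum_sub_distrib,
    ← Finset.sum_mul, hsum, ← Finset.sum_div, ← hZdef, div_self (ne_of_gt hZ)] at hsum2
  linarith

/-- The CSMA product-form (Gibbs) distribution. -/
noncomputable def gibbs {E : Type*} [DecidableEq E] (I : Finset (Finset E)) (β : ℝ)
    (r : E → ℝ) (i : Finset E) : ℝ :=
  Real.exp (β * ∑ l ∈ i, r l) / ∑ i' ∈ I, Real.exp (β * ∑ l ∈ i', r l)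

/-- KKT sufficiency: if (x*, τ*, r*) satisfies the stationarity and complementary
slackness conditions with τ* the Gibbs distribution, then (x*, τ*) is optimal for MP. -/
theorem kkt_implies_MP_optimal {S E : Type*} [Fintype S] [DecidableEq E]
    (I : Finset (Finset E)) (hI : I.Nonempty) (route : S → Finset E)
    (β : ℝ) (hβ : 0 < β)
    (xstar : S → ℝ) (τstar : Finset E → ℝ) (rstar : E → ℝ)
    (hxpos : ∀ s, 0 < xstar s) (hrnn : ∀ l, 0 ≤ rstar l)
    (hτ : ∀ i, τstar i = gibbs I β rstar i)
    (ha : ∀ s, 1 / (xstar s) ^ 2 = ∑ l ∈ route s, rstar l)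
    (hb : ∀ l : E, (∑ s, if l ∈ route s then xstar s else 0)
        ≤ ∑ i ∈ I.filter (fun i => l ∈ i), τstar i)
    (hcs : ∀ l : E, 0 < rstar l →
        (∑ s, if l ∈ route s then xstar s else 0)
          = ∑ i ∈ I.filter (fun i => l ∈ i), τstar i) :
    ∀ (x : S → ℝ) (τ : Finset E → ℝ), (∀ s, 0 < x s) → (∀ i ∈ I, 0 ≤ τ i) →
      (∑ i ∈ I, τ i = 1) →
      (∀ l : E, (∑ s, if l ∈ route s then x s else 0)
        ≤ ∑ i ∈ I.filter (fun i => l ∈ i), τ i) →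
      (∑ s, -1 / x s) - (1 / β) * ∑ i ∈ I, τ i * Real.log (τ i)
        ≤ (∑ s, -1 / xstar s) - (1 / β) * ∑ i ∈ I, τstar i * Real.log (τstar i) := by
  intro x τ hxp hτnn hτ1 hfeas
  set c : Finset E → ℝ := fun i => ∑ l ∈ i, rstar l with hc
  set T : Finset E := (Finset.univ : Finset S).biUnion route ∪ I.biUnion id with hT
  have hsubS : ∀ s : S, route s ⊆ T :=
    fun s => (Finset.subset_biUnion_of_mem route (Finset.mem_univ s)).trans
      Finset.subset_union_left
  have hsubI : ∀ i ∈ I, i ⊆ T :=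
    fun i hi => (Finset.subset_biUnion_of_mem id hi).trans Finset.subset_union_right
  have swapx : ∀ y : S → ℝ,
      ∑ l ∈ T, rstar l * (∑ s, if l ∈ route s then y s else 0)
        = ∑ s, c (route s) * y s := by
    intro y
    simp_rw [Finset.mul_sum, mul_ite, mul_zero]
    rw [Finset.sum_comm]
    refine Finset.sum_congr rfl fun s _ => ?_
    rw [Finset.sum_ite_mem, Finset.inter_eq_right.mpr (hsubS s), ← Finset.sum_mul]
  have swapτ : ∀ σ : Finset E → ℝ,
      ∑ l ∈ T, rstar l * (∑ i ∈ I.filter (fun i => l ∈ i), σ i)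
        = ∑ i ∈ I, c i * σ i := by
    intro σ
    simp_rw [Finset.sum_filter, Finset.mul_sum, mul_ite, mul_zero]
    rw [Finset.sum_comm]
    refine Finset.sum_congr rfl fun i hi => ?_
    rw [Finset.sum_ite_mem, Finset.inter_eq_right.mpr (hsubI i hi), ← Finset.sum_mul]
  -- Gibbs facts
  set Z := ∑ i' ∈ I, Real.exp (β * ∑ l ∈ i', rstar l) with hZdef
  have hZ : 0 < Z := Finset.sum_pos (fun i _ => Real.exp_pos _) hI
  have hτstar_pos : ∀ i, 0 < τstar i := fun i => by
    rw [hτ i]; exact div_pos (Real.exp_pos _) hZ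
  have hτstar1 : ∑ i ∈ I, τstar i = 1 := by
    simp_rw [hτ]; unfold gibbs
    rw [← Finset.sum_div, ← hZdef, div_self (ne_of_gt hZ)]
  have hlogτ : ∀ i, Real.log (τstar i) = β * c i - Real.log Z := by
    intro i
    rw [hτ i]; unfold gibbs
    rw [Real.log_div (Real.exp_ne_zero _) (by rw [← hZdef]; exact ne_of_gt hZ),
      Real.log_exp, ← hZdef]
  -- Gap terms
  have hgap : 0 ≤ ∑ i ∈ I, c i * τ i - ∑ s, c (route s) * x s := by
    rw [← swapτ τ, ← swapx x, ← Finset.sum_sub_distrib]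
    apply Finset.sum_nonneg
    intro l _
    rw [← mul_sub]
    exact mul_nonneg (hrnn l) (sub_nonneg.mpr (hfeas l))
  have hgapstar : ∑ i ∈ I, c i * τstar i - ∑ s, c (route s) * xstar s = 0 := by
    rw [← swapτ τstar, ← swapx xstar, ← Finset.sum_sub_distrib]
    apply Finset.sum_eq_zero
    intro l _
    rw [← mul_sub]
    rcases (hrnn l).eq_or_lt with h | h
    · rw [← h, zero_mul]
    · rw [hcs l h]; ring
  -- x part
  have hxpart : ∑ s, (-1 / x s - c (route s) * x s)
      ≤ ∑ s, (-1 / xstar s - c (route s) * xstar s) := by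
    apply Finset.sum_le_sum
    intro s _
    have hcs' : c (route s) = 1 / (xstar s) ^ 2 := (ha s).symm
    rw [hcs']
    have := lemA (x s) (xstar s) (hxp s) (hxpos s)
    linarith
  -- τ part
  have hτpart : ∑ i ∈ I, c i * τ i - (1/β) * ∑ i ∈ I, τ i * Real.log (τ i)
      ≤ (1/β) * Real.log Z := by
    have hB := lemB I (fun i => Real.exp (β * c i)) τ (fun i _ => Real.exp_pos _) hτnn hτ1
    simp only [Real.log_exp] at hB
    have h1 : ∑ i ∈ I, τ i * (β * c i) = β * ∑ i ∈ I, c i * τ i := by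
      rw [Finset.mul_sum]
      exact Finset.sum_congr rfl fun i _ => by ring
    have hZeq : (∑ i ∈ I, Real.exp (β * c i)) = Z := rfl
    rw [h1, hZeq] at hB
    have hβ' : (0:ℝ) ≤ 1/β := by positivity
    calc ∑ i ∈ I, c i * τ i - (1/β) * ∑ i ∈ I, τ i * Real.log (τ i)
        = (1/β) * (β * ∑ i ∈ I, c i * τ i - ∑ i ∈ I, τ i * Real.log (τ i)) := by
          field_simp
      _ ≤ (1/β) * Real.log Z := mul_le_mul_of_nonneg_left hB hβ'
  -- τ part equality at star
  have hτstareq : ∑ i ∈ I, c i * τstar i - (1/β) * ∑ i ∈ I, τstar i * Real.log (τstar i)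
      = (1/β) * Real.log Z := by
    have h1 : ∀ i ∈ I, τstar i * Real.log (τstar i)
        = β * (c i * τstar i) - Real.log Z * τstar i := by
      intro i _
      rw [hlogτ i]; ring
    rw [Finset.sum_congr rfl h1, Finset.sum_sub_distrib, ← Finset.mul_sum,
      ← Finset.mul_sum, hτstar1, mul_one]
    field_simp; ring
  -- assembly
  have e1 : ∑ s, (-1 / x s - c (route s) * x s)
      = (∑ s, -1 / x s) - ∑ s, c (route s) * x s := Finset.sum_sub_distrib _ _
  have e2 : ∑ s, (-1 / xstar s - c (route s) * xstar s)
      = (∑ s, -1 / xstar s) - ∑ s, c (route s) * xstar s := Finset.sum_sub_distrib _ _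
  linarith
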